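/- Let M = ℚ(√m) be a real quadratic field where m is a squarefree positive integer all of whose prime divisors are ≡ 1 (mod 4). Then -1 is a norm from M, i.e., there exists u ∈ M with norm_{M/ℚ}(u) = -1. -/

import Mathlib

/-- Let `M = ℚ(√m)` be a real quadratic field, where `m` is a squarefree positive
integer all of whose prime divisors are `≡ 1 (mod 4)`.  Then `-1` is a norm from `M`:
there exists `u ∈ M` with `norm_{M/ℚ}(u) = -1`. -/
theorem stmt15 (M : Type) [Field M] [NumberField M]
    (hdim : Module.finrank ℚ M = 2)
    (m : ℕ) (hsf : Squarefree m) (hpos : 0 < m)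
    (hp : ∀ p : ℕ, p.Prime → p ∣ m → p % 4 = 1)
    (α : M) (hα : α ^ 2 = (m : M)) (hgen : Algebra.adjoin ℚ {α} = ⊤) :
    ∃ u : M, Algebra.norm ℚ u = -1 := by
  classical
  -- m ≠ 1
  have hm1 : m ≠ 1 := by
    rintro rfl
    have : α = 1 ∨ α = -1 := by
      have h : (α - 1) * (α + 1) = 0 := by ring_nf; rw [hα]; push_cast; ring
      rcases mul_eq_zero.mp h with h | h
      · left; linear_combination h
      · right; linear_combination h
    have hb : α ∈ (⊥ : Subalgebra ℚ M) := by
      rcases this with rfl | rfl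
      · exact one_mem _
      · exact neg_mem (one_mem _)
    have : (⊥ : Subalgebra ℚ M) = ⊤ := by
      rw [← hgen]
      refine le_antisymm ?_ ?_
      · exact bot_le
      · exact Algebra.adjoin_le (Set.singleton_subset_iff.mpr hb)
    have h1 : Module.finrank ℚ M = 1 := Subalgebra.bot_eq_top_iff_finrank_eq_one.mp this
    omega
  -- m is a sum of two squares
  have hsq : IsSquare (-1 : ZMod m) := by
    rw [ZMod.isSquare_neg_one_iff_forall_mem_primeFactors_mod_four_ne_three hsf]
    simp only [Nat.mem_primeFactors, and_imp]
    intro q hq hqd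
    have := hp q hq hqd
    omega
  obtain ⟨x, y, hxy⟩ := Nat.eq_sq_add_sq_of_isSquare_mod_neg_one hsq
  -- get a, b with b ≠ 0 and m = a^2 + b^2
  obtain ⟨a, b, hb0, hab⟩ : ∃ a b : ℕ, b ≠ 0 ∧ m = a ^ 2 + b ^ 2 := by
    rcases Nat.eq_zero_or_pos y with rfl | hy
    · refine ⟨0, x, ?_, by omega⟩
      rintro rfl
      simp at hxy
      omega
    · exact ⟨x, y, hy.ne', hxy⟩
  have hbM : (b : M) ≠ 0 := Nat.cast_ne_zero.mpr hb0
  set u : M := ((a : M) + α) / (b : M) with hu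
  set c : ℚ := 2 * a / b with hc
  set p : Polynomial ℚ := Polynomial.X ^ 2 - Polynomial.C c * Polynomial.X - 1 with hpdef
  have hcM : algebraMap ℚ M c = 2 * (a : M) / (b : M) := by
    rw [hc]
    push_cast [map_div₀, map_mul, map_natCast, map_ofNat]
    norm_num
  have hα' : α ^ 2 = (a : M) ^ 2 + (b : M) ^ 2 := by
    rw [hα, hab]; push_cast; ring
  have hroot : Polynomial.aeval u p = 0 := by
    simp only [hpdef, map_sub, map_mul, map_one, map_pow, Polynomial.aeval_X,
      Polynomial.aeval_C, hu, hcM]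
    field_simp
    linear_combination hα'
  have hint : IsIntegral ℚ u := IsIntegral.of_finite ℚ u
  have hpm : p.Monic := by
    rw [hpdef]
    monicity!
  have hpdeg : p.natDegree = 2 := by
    rw [hpdef]
    compute_degree!
  have hdvd : minpoly ℚ u ∣ p := minpoly.dvd ℚ u hroot
  -- α ∈ adjoin ℚ {u}
  have hadj : Algebra.adjoin ℚ ({u} : Set M) = ⊤ := by
    have hαmem : α ∈ Algebra.adjoin ℚ ({u} : Set M) := by
      have humem : u ∈ Algebra.adjoin ℚ ({u} : Set M) :=
        Algebra.subset_adjoin (Set.mem_singleton u)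
      have : α = (b : M) * u - (a : M) := by
        rw [hu]; field_simp; ring
      rw [this]
      exact sub_mem (mul_mem (Subalgebra.natCast_mem _ _) humem) (Subalgebra.natCast_mem _ _)
    rw [← top_le_iff, ← hgen]
    exact Algebra.adjoin_le (by simpa using hαmem)
  -- degree of minpoly is 2
  have hfield : (IntermediateField.adjoin ℚ ({u} : Set M)) = ⊤ := by
    apply IntermediateField.toSubalgebra_injective
    rw [IntermediateField.adjoin_simple_toSubalgebra_of_isAlgebraic hint.isAlgebraic, hadj,
      IntermediateField.top_toSubalgebra]
  have hdeg : (minpoly ℚ u).natDegree = 2 := by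
    have h1 := IntermediateField.adjoin.finrank hint
    rw [hfield] at h1
    rw [← h1, IntermediateField.finrank_top', hdim]
  -- minpoly = p
  have heq : minpoly ℚ u = p := by
    refine Polynomial.eq_of_monic_of_associated (minpoly.monic hint) hpm ?_
    exact Polynomial.associated_of_dvd_of_natDegree_le hdvd hpm.ne_zero (by rw [hdeg, hpdeg])
  have hcoeff : (minpoly ℚ u).coeff 0 = -1 := by
    rw [heq, hpdef]
    simp
  -- power basis with generator u
  have hα' : α ∈ Algebra.adjoin ℚ ({u} : Set M) := by rw [hadj]; trivial
  let pb : PowerBasis ℚ M :=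
    (Algebra.adjoin.powerBasis hint).map <|
      (Subalgebra.equivOfEq _ _ hadj).trans Subalgebra.topEquiv
  have hgen' : pb.gen = u := rfl
  have hdim' : pb.dim = 2 := by
    have := pb.finrank
    rw [hdim] at this
    omega
  refine ⟨u, ?_⟩
  have := Algebra.PowerBasis.norm_gen_eq_coeff_zero_minpoly pb
  rw [hgen', hdim', hcoeff] at this
  rw [this]
  ring
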